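/- Let G be a finitely generated group and let φ : G → S¹ be a group homomorphism into the circle group. Then φ can be deformed through homomorphisms to a homomorphism with finite image: there exists a family F : ℝ → Hom(G, S¹) of group homomorphisms such that F(0) = φ, the range of F(1) is a finite subset of S¹, and for every g ∈ G the map t ↦ F(t)(g) is continuous. -/

import Mathlib

/-- Any homomorphism of a finitely generated group to the circle group can be
deformed, through homomorphisms, to a homomorphism with finite image. -/
theorem deform_to_finite_image_hom
    (G : Type*) [Group G] [Group.FG G] (φ : G →* Circle) :
    ∃ F : ℝ → (G →* Circle),
      F 0 = φ ∧
      (Set.range (F 1)).Finite ∧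
      ∀ g : G, Continuous fun t : ℝ => F t g := by
  classical
  -- the abelianization is finitely generated
  haveI : Group.FG (Abelianization G) :=
    Group.fg_of_surjective (f := Abelianization.of)
      (fun x => Quotient.inductionOn' x fun g => ⟨g, rfl⟩)
  -- structure theorem for the (additive) abelianization
  obtain ⟨n, ι, fι, p, hp, e, ⟨ee⟩⟩ :=
    AddCommGroup.equiv_free_prod_directSum_zmod (Additive (Abelianization G))
  haveI : ∀ i, NeZero (p i ^ e i) := fun i => ⟨pow_ne_zero _ (hp i).ne_zero⟩
  haveI : Finite (DirectSum ι fun i => ZMod (p i ^ e i)) :=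
    Finite.of_equiv _ DFinsupp.equivFunOnFintype.symm
  set φ' : Abelianization G →* Circle := Abelianization.lift φ with hφ'
  set φA : Additive (Abelianization G) →+ Additive Circle := MonoidHom.toAdditive φ' with hφA
  set ψ : ((Fin n →₀ ℤ) × DirectSum ι fun i => ZMod (p i ^ e i)) →+ Additive Circle :=
    φA.comp ee.symm.toAddMonoidHom with hψ
  set θ : Fin n → ℝ := fun i => Complex.arg ((Additive.toMul (ψ (Finsupp.single i 1, 0)) : Circle) : ℂ) with hθdef
  have hθ : ∀ i, Circle.exp (θ i) = Additive.toMul (ψ (Finsupp.single i 1, 0)) := fun i =>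
    Circle.exp_arg _
  set L : (Fin n →₀ ℤ) →+ ℝ := Finsupp.liftAddHom fun i => zmultiplesHom ℝ (θ i) with hL
  have key : Circle.expHom.comp L = ψ.comp (AddMonoidHom.inl _ _) := by
    ext i
    simp only [AddMonoidHom.comp_apply, AddMonoidHom.coe_comp, Function.comp_apply,
      Finsupp.singleAddHom_apply, AddMonoidHom.inl_apply, hL, Finsupp.liftAddHom_apply_single,
      zmultiplesHom_apply, one_smul]
    exact congrArg (fun z : Circle => (z : ℂ)) (hθ i)
  -- the deformation
  set D := DirectSum ι fun i => ZMod (p i ^ e i) with hD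
  set F : ℝ → (G →* Circle) := fun t =>
    (MonoidHom.toAdditive.symm
      ((Circle.expHom.comp ((DistribMulAction.toAddMonoidHom ℝ (1 - t)).comp
          (L.comp ((AddMonoidHom.fst (Fin n →₀ ℤ) D).comp ee.toAddMonoidHom)))) +
        (ψ.comp ((AddMonoidHom.inr (Fin n →₀ ℤ) D).comp
          ((AddMonoidHom.snd (Fin n →₀ ℤ) D).comp ee.toAddMonoidHom))))).comp Abelianization.of
    with hFdef
  have hF : ∀ (t : ℝ) (g : G), F t g =
      Circle.exp ((1 - t) • L (ee (Additive.ofMul (Abelianization.of g))).1) *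
        Additive.toMul (ψ (0, (ee (Additive.ofMul (Abelianization.of g))).2)) :=
    fun t g => rfl
  refine ⟨F, ?_, ?_, ?_⟩
  · -- F 0 = φ
    ext g
    rw [hF]
    set a := ee (Additive.ofMul (Abelianization.of g)) with ha
    have h1 : Circle.exp ((1 - (0:ℝ)) • L a.1) = Additive.toMul (ψ (a.1, 0)) := by
      have h2 := DFunLike.congr_fun key a.1
      simp only [AddMonoidHom.comp_apply, AddMonoidHom.inl_apply] at h2
      rw [show ((1:ℝ) - 0) = 1 by norm_num, one_smul]
      exact congrArg Additive.toMul h2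
    rw [h1, ← toMul_add, ← map_add ψ, Prod.mk_add_mk, add_zero, zero_add]
    rw [show ((a.1, a.2) : (Fin n →₀ ℤ) × D) = a from rfl, ha]
    simp only [hψ, AddMonoidHom.comp_apply, AddEquiv.coe_toAddMonoidHom,
      AddEquiv.symm_apply_apply]
    simp [hφA, hφ']
  · -- finite image
    apply Set.Finite.subset (Set.finite_range (fun y : D => Additive.toMul (ψ (0, y))))
    rintro _ ⟨g, rfl⟩
    refine ⟨(ee (Additive.ofMul (Abelianization.of g))).2, ?_⟩
    rw [hF]
    simp
  · -- continuity
    intro g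
    simp only [hF]
    exact (Circle.exp.continuous.comp (by fun_prop)).mul continuous_const
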